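/- The algebra A(q), regarded with its (Z/2)^n-grading in which e_g has degree g, is τ-graded Frobenius for τ = (1,1,...,1): its dual A(q)* is isomorphic to the shift A(q)(τ) as graded left A(q)-modules. -/

import Mathlib

open Finset

inductive AqRel (K : Type) [Field K] (n : ℕ) (q : Fin n → Fin n → K) :
    FreeAlgebra K (Fin n) → FreeAlgebra K (Fin n) → Prop
  | comm : ∀ i j : Fin n, i < j →
      AqRel K n q (FreeAlgebra.ι K j * FreeAlgebra.ι K i)
        (q i j • (FreeAlgebra.ι K i * FreeAlgebra.ι K j))
  | sq : ∀ i : Fin n, AqRel K n q (FreeAlgebra.ι K i * FreeAlgebra.ι K i) 0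

abbrev Aq (K : Type) [Field K] (n : ℕ) (q : Fin n → Fin n → K) : Type :=
  RingQuot (AqRel K n q)

noncomputable def xq (K : Type) [Field K] (n : ℕ) (q : Fin n → Fin n → K) (i : Fin n) :
    Aq K n q :=
  RingQuot.mkAlgHom K (AqRel K n q) (FreeAlgebra.ι K i)

noncomputable def eq' (K : Type) [Field K] (n : ℕ) (q : Fin n → Fin n → K)
    (g : Fin n → ZMod 2) : Aq K n q :=
  ((List.finRange n).map (fun i => if g i = 1 then xq K n q i else 1)).prod

/-- The homogeneous component of degree `g ∈ (ℤ/2)ⁿ` of `A(q)`: the line `K·e_g`. -/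
noncomputable def AqGrade (K : Type) [Field K] (n : ℕ) (q : Fin n → Fin n → K)
    (g : Fin n → ZMod 2) : Submodule K (Aq K n q) :=
  Submodule.span K {eq' K n q g}

/- ### auxiliary -/

lemma zmod2_em (a : ZMod 2) : a = 0 ∨ a = 1 := by revert a; decide

lemma zmod2_ne_one {a : ZMod 2} (h : a ≠ 1) : a = 0 := by revert a h; decide

lemma zmod2_ne_zero {a : ZMod 2} (h : a ≠ 0) : a = 1 := by revert a h; decide

section Lists
variable {n : ℕ}

lemma finRange_sorted : (List.finRange n).Pairwise (· < ·) :=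
  List.pairwise_lt_finRange n

def dd (i : Fin n) : Fin n → ZMod 2 := fun k => if k = i then 1 else 0

def supp (g : Fin n → ZMod 2) : List (Fin n) :=
  (List.finRange n).filter (fun i => g i = 1)

lemma supp_sorted (g : Fin n → ZMod 2) : (supp g).Pairwise (· < ·) :=
  List.Pairwise.filter _ finRange_sorted

lemma supp_nodup (g : Fin n → ZMod 2) : (supp g).Nodup :=
  List.Nodup.filter _ (List.nodup_finRange n)

lemma mem_supp {g : Fin n → ZMod 2} {i : Fin n} : i ∈ supp g ↔ g i = 1 := by
  simp [supp, List.mem_filter, List.mem_finRange]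

lemma supp_add_dd {g : Fin n → ZMod 2} {i : Fin n} (hgi : g i = 0) :
    supp (g + dd i) = List.orderedInsert (· ≤ ·) i (supp g) := by
  refine List.Perm.eq_of_pairwise' (r := (· ≤ ·)) ?_ ?_ ?_
  rotate_right
  · rw [List.perm_ext_iff_of_nodup (supp_nodup _)]
    · intro x
      rw [mem_supp, List.mem_orderedInsert, mem_supp]
      rcases eq_or_ne x i with rfl | hx
      · simp [dd, hgi, Pi.add_apply]
      · simp [dd, hx, Pi.add_apply]
    · exact ((List.perm_orderedInsert _ _ _).nodup_iff).mpr
        (List.nodup_cons.mpr ⟨fun h => by simp [mem_supp, hgi] at h, supp_nodup g⟩)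
  · exact (supp_sorted _).imp le_of_lt
  · exact List.Pairwise.orderedInsert _ _ ((supp_sorted g).imp le_of_lt)

lemma supp_zero : supp (0 : Fin n → ZMod 2) = [] := by
  simp [supp, List.filter_eq_nil_iff]

lemma supp_dd (i : Fin n) : supp (dd i) = [i] := by
  have := supp_add_dd (g := (0 : Fin n → ZMod 2)) (i := i) rfl
  simpa [supp_zero] using this

def ind (l : List (Fin n)) : Fin n → ZMod 2 := fun i => if i ∈ l then 1 else 0

lemma ind_supp (g : Fin n → ZMod 2) : ind (supp g) = g := by
  funext i
  rcases zmod2_em (g i) with h | h <;> simp [ind, mem_supp, h]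

lemma ind_cons {a : Fin n} {l : List (Fin n)} (ha : a ∉ l) :
    ind (a :: l) = ind l + dd a := by
  funext k
  rcases eq_or_ne k a with rfl | hk
  · simp [ind, dd, ha]
  · simp [ind, dd, hk]

end Lists

section Alg
variable (K : Type) [Field K] (n : ℕ) (q : Fin n → Fin n → K)

lemma xq_sq (i : Fin n) : xq K n q i * xq K n q i = 0 := by
  have := RingQuot.mkAlgHom_rel K (AqRel.sq (K := K) (q := q) i)
  simpa [xq, map_mul] using this

lemma xq_comm {i j : Fin n} (h : i < j) :
    xq K n q j * xq K n q i = q i j • (xq K n q i * xq K n q j) := by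
  have := RingQuot.mkAlgHom_rel K (AqRel.comm (K := K) (q := q) i j h)
  simpa [xq, map_mul, map_smul] using this

noncomputable def word (l : List (Fin n)) : Aq K n q :=
  (l.map (xq K n q)).prod

@[simp] lemma word_nil : word K n q [] = 1 := rfl

@[simp] lemma word_cons (a : Fin n) (l : List (Fin n)) :
    word K n q (a :: l) = xq K n q a * word K n q l := by simp [word]

lemma eq'_eq_word (g : Fin n → ZMod 2) : eq' K n q g = word K n q (supp g) := by
  rw [eq', word, supp]
  induction (List.finRange n) with
  | nil => simp
  | cons a l ih =>
    by_cases h : g a = 1 <;> simp [h, ih, List.filter_cons]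

variable (hq : ∀ i j : Fin n, i < j → q i j ≠ 0)
include hq

lemma xq_mul_word (i : Fin n) :
    ∀ l : List (Fin n), l.Pairwise (· < ·) →
      (i ∈ l → xq K n q i * word K n q l = 0) ∧
      (i ∉ l → ∃ c : K, c ≠ 0 ∧
        xq K n q i * word K n q l = c • word K n q (List.orderedInsert (· ≤ ·) i l)) := by
  intro l
  induction l with
  | nil =>
    intro _
    refine ⟨by simp, fun _ => ⟨1, one_ne_zero, by simp⟩⟩
  | cons a l ih =>
    intro hs
    have hs' : l.Pairwise (· < ·) := hs.of_cons
    have hlt : ∀ b ∈ l, a < b := fun b hb => (List.pairwise_cons.mp hs).1 b hb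
    obtain ⟨ih1, ih2⟩ := ih hs'
    constructor
    · intro hi
      rcases List.mem_cons.mp hi with rfl | hi
      · rw [word_cons, ← mul_assoc, xq_sq, zero_mul]
      · have hai : a < i := hlt i hi
        rw [word_cons, ← mul_assoc, xq_comm K n q hai, smul_mul_assoc, mul_assoc,
          ih1 hi, mul_zero, smul_zero]
    · intro hi
      have hia : i ≠ a := fun h => hi (h ▸ List.mem_cons_self)
      have hil : i ∉ l := fun h => hi (List.mem_cons_of_mem a h)
      obtain ⟨c, hc, hcw⟩ := ih2 hil
      rcases lt_or_gt_of_ne hia with hlt' | hgt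
      · refine ⟨1, one_ne_zero, ?_⟩
        rw [List.orderedInsert, if_pos hlt'.le, one_smul]; simp
      · refine ⟨q a i * c, mul_ne_zero (hq a i hgt) hc, ?_⟩
        rw [List.orderedInsert, if_neg (not_le.mpr hgt), word_cons, ← mul_assoc,
          xq_comm K n q hgt, smul_mul_assoc, mul_assoc, hcw, word_cons, mul_smul_comm,
          mul_smul]

lemma xq_mul_eq' (i : Fin n) (g : Fin n → ZMod 2) :
    (g i = 1 → xq K n q i * eq' K n q g = 0) ∧
    (g i = 0 → ∃ c : K, c ≠ 0 ∧
      xq K n q i * eq' K n q g = c • eq' K n q (g + dd i)) := by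
  obtain ⟨h1, h2⟩ := xq_mul_word K n q hq i (supp g) (supp_sorted g)
  constructor
  · intro hgi
    rw [eq'_eq_word]
    exact h1 (mem_supp.mpr hgi)
  · intro hgi
    have hns : i ∉ supp g := fun h => by simp [mem_supp.mp h] at hgi
    obtain ⟨c, hc, hcw⟩ := h2 hns
    refine ⟨c, hc, ?_⟩
    rw [eq'_eq_word, eq'_eq_word, supp_add_dd hgi]
    exact hcw

lemma word_mul_eq' :
    ∀ l : List (Fin n), l.Pairwise (· < ·) → ∀ h : Fin n → ZMod 2,
      ∃ c : K, word K n q l * eq' K n q h = c • eq' K n q (ind l + h) ∧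
        ((∀ i ∈ l, h i = 0) → c ≠ 0) := by
  intro l
  induction l with
  | nil =>
    intro _ h
    refine ⟨1, ?_, fun _ => one_ne_zero⟩
    have hi : ind ([] : List (Fin n)) + h = h := by funext k; simp [ind]
    rw [hi, word_nil, one_mul, one_smul]
  | cons a l ih =>
    intro hs h
    have hs' : l.Pairwise (· < ·) := hs.of_cons
    have hal : a ∉ l := fun hm => lt_irrefl a ((List.pairwise_cons.mp hs).1 a hm)
    obtain ⟨c, hcw, hc⟩ := ih hs' h
    rcases zmod2_em ((ind l + h) a) with h0 | h1
    · obtain ⟨c', hc', hcw'⟩ := (xq_mul_eq' K n q hq a (ind l + h)).2 h0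
      refine ⟨c * c', ?_, fun hd => mul_ne_zero (hc fun i hi => hd i (List.mem_cons_of_mem a hi)) hc'⟩
      rw [word_cons, mul_assoc, hcw, mul_smul_comm, hcw', ind_cons hal, smul_smul]
      congr 2
      abel
    · refine ⟨0, ?_, fun hd => ?_⟩
      · rw [word_cons, mul_assoc, hcw, mul_smul_comm,
          (xq_mul_eq' K n q hq a (ind l + h)).1 h1, smul_zero, zero_smul]
      · exfalso
        have h2 : ind l a = 0 := by simp [ind, hal]
        have h3 : h a = 0 := hd a (List.mem_cons_self)
        rw [Pi.add_apply, h2, h3] at h1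
        simp at h1
    
lemma eq'_mul_eq' (g h : Fin n → ZMod 2) :
    ∃ c : K, eq' K n q g * eq' K n q h = c • eq' K n q (g + h) ∧
      ((∀ i, g i = 1 → h i = 0) → c ≠ 0) := by
  obtain ⟨c, hcw, hc⟩ := word_mul_eq' K n q hq (supp g) (supp_sorted g) h
  rw [ind_supp] at hcw
  exact ⟨c, by rw [eq'_eq_word K n q g]; exact hcw,
    fun hd => hc fun i hi => hd i (mem_supp.mp hi)⟩

end Alg

/- ### more dd lemmas -/
section Lists2
variable {n : ℕ}

lemma add_dd_self (g : Fin n → ZMod 2) (i : Fin n) (h : g i = 0) : (g + dd i) i = 1 := by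
  simp [dd, h]

lemma add_dd_other (g : Fin n → ZMod 2) {i k : Fin n} (h : k ≠ i) : (g + dd i) k = g k := by
  simp [dd, h]

lemma pset_insert {g : Fin n → ZMod 2} {i j : Fin n} (hij : i < j) (hgi : g i = 0) :
    Finset.univ.filter (fun k => k < j ∧ (g + dd i) k = 1)
      = insert i (Finset.univ.filter (fun k => k < j ∧ g k = 1)) := by
  ext k
  rcases eq_or_ne k i with rfl | hk
  · simp only [Finset.mem_filter, Finset.mem_insert]; simp [hij, dd, hgi]
  · simp only [Finset.mem_filter, Finset.mem_insert]; simp [Finset.mem_insert, hk, dd]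

lemma pset_unchanged {g : Fin n → ZMod 2} {i j : Fin n} (hij : i < j) :
    Finset.univ.filter (fun k => k < i ∧ (g + dd j) k = 1)
      = Finset.univ.filter (fun k => k < i ∧ g k = 1) := by
  ext k
  rcases eq_or_ne k j with rfl | hk
  · simp [not_lt.mpr hij.le]
  · simp only [Finset.mem_filter]; simp [dd, hk]

end Lists2

section Rep
variable (K : Type) [Field K] (n : ℕ) (q : Fin n → Fin n → K)

abbrev VV := (Fin n → ZMod 2) →₀ K

noncomputable def coef (g : Fin n → ZMod 2) (i : Fin n) : K :=
  if g i = 1 then 0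
  else ∏ j ∈ Finset.univ.filter (fun j => j < i ∧ g j = 1), q j i

noncomputable def TT (i : Fin n) : VV K n →ₗ[K] VV K n :=
  Finsupp.lsum K (fun g => coef K n q g i • (Finsupp.lsingle (g + dd i) : K →ₗ[K] VV K n))

lemma TT_single (i : Fin n) (g : Fin n → ZMod 2) (c : K) :
    TT K n q i (Finsupp.single g c) = coef K n q g i • Finsupp.single (g + dd i) c := by
  rw [TT, Finsupp.lsum_single]
  rfl

lemma coef_shift_lt {g : Fin n → ZMod 2} {i j : Fin n} (hij : i < j) (hgi : g i = 0)
    (hgj : g j = 0) :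
    coef K n q (g + dd i) j = q i j * coef K n q g j := by
  have h1 : (g + dd i) j = 0 := by rw [add_dd_other g hij.ne']; exact hgj
  have hnm : i ∉ Finset.univ.filter (fun k => k < j ∧ g k = 1) := by
    intro hmem
    rw [Finset.mem_filter] at hmem
    rw [hgi] at hmem
    exact absurd hmem.2.2 (by decide)
  rw [coef, coef, if_neg (by rw [h1]; decide), if_neg (by rw [hgj]; decide),
    pset_insert hij hgi, Finset.prod_insert hnm]

lemma coef_shift_gt {g : Fin n → ZMod 2} {i j : Fin n} (hij : i < j) :
    coef K n q (g + dd j) i = coef K n q g i := by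
  have h1 : (g + dd j) i = g i := add_dd_other g hij.ne
  rw [coef, coef, h1, pset_unchanged hij]

lemma TT_sq (i : Fin n) : TT K n q i ∘ₗ TT K n q i = 0 := by
  apply Finsupp.lhom_ext
  intro g c
  rw [LinearMap.comp_apply, TT_single, map_smul, TT_single, LinearMap.zero_apply]
  rcases zmod2_em (g i) with h | h
  · have h2 : coef K n q (g + dd i) i = 0 := by
      rw [coef, if_pos (add_dd_self g i h)]
    simp [h2]
  · have h2 : coef K n q g i = 0 := by rw [coef, if_pos h]
    simp [h2]

lemma TT_comm {i j : Fin n} (hij : i < j) :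
    TT K n q j ∘ₗ TT K n q i = q i j • (TT K n q i ∘ₗ TT K n q j) := by
  apply Finsupp.lhom_ext
  intro g c
  rw [LinearMap.comp_apply, LinearMap.smul_apply, LinearMap.comp_apply,
    TT_single, TT_single, map_smul, map_smul, TT_single, TT_single]
  rcases zmod2_em (g i) with hgi | hgi
  · rcases zmod2_em (g j) with hgj | hgj
    · -- g i = 0, g j = 0
      rw [coef_shift_lt K n q hij hgi hgj, coef_shift_gt K n q hij]
      simp only [smul_smul]
      have hfs : g + dd i + dd j = g + dd j + dd i := add_right_comm _ _ _
      rw [hfs]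
      congr 1
      ring
    · -- g j = 1 : both sides zero
      have h2 : coef K n q (g + dd i) j = 0 := by
        rw [coef, if_pos (by rw [add_dd_other g hij.ne']; exact hgj)]
      have h3 : coef K n q g j = 0 := by rw [coef, if_pos hgj]
      simp [h2, h3]
  · -- g i = 1 : both sides zero
    have h2 : coef K n q g i = 0 := by rw [coef, if_pos hgi]
    have h3 : coef K n q (g + dd j) i = 0 := by
      rw [coef_shift_gt K n q hij]; exact h2
    simp [h2, h3]

noncomputable def rho : Aq K n q →ₐ[K] Module.End K (VV K n) :=
  RingQuot.liftAlgHom K ⟨FreeAlgebra.lift K (fun i => TT K n q i), by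
    intro x y h
    cases h with
    | comm i j hij =>
      rw [map_mul, map_smul, map_mul, FreeAlgebra.lift_ι_apply, FreeAlgebra.lift_ι_apply]
      show TT K n q j * TT K n q i = q i j • (TT K n q i * TT K n q j)
      rw [Module.End.mul_eq_comp, Module.End.mul_eq_comp]
      exact TT_comm K n q hij
    | sq i =>
      rw [map_mul, map_zero, FreeAlgebra.lift_ι_apply]
      show TT K n q i * TT K n q i = 0
      rw [Module.End.mul_eq_comp]
      exact TT_sq K n q i⟩

lemma rho_xq (i : Fin n) : rho K n q (xq K n q i) = TT K n q i := by
  rw [xq, rho, RingQuot.liftAlgHom_mkAlgHom_apply, FreeAlgebra.lift_ι_apply]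

lemma rho_word (l : List (Fin n)) (hs : l.Pairwise (· < ·)) :
    rho K n q (word K n q l) (Finsupp.single 0 1) = Finsupp.single (ind l) 1 := by
  induction l with
  | nil =>
    have h0 : ind ([] : List (Fin n)) = 0 := by funext k; simp [ind]
    rw [word_nil, map_one, h0]
    rfl
  | cons a l ih =>
    have hs' : l.Pairwise (· < ·) := hs.of_cons
    have hlt : ∀ b ∈ l, a < b := fun b hb => (List.pairwise_cons.mp hs).1 b hb
    have hal : a ∉ l := fun hm => lt_irrefl a (hlt a hm)
    rw [word_cons, map_mul, Module.End.mul_apply, ih hs', rho_xq, TT_single]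
    have hca : coef K n q (ind l) a = 1 := by
      have h1 : ind l a ≠ 1 := by simp [ind, hal]
      have h2 : Finset.univ.filter (fun k => k < a ∧ ind l k = 1) = ∅ := by
        ext k
        simp only [Finset.mem_filter, Finset.mem_univ, true_and, Finset.notMem_empty,
          iff_false, not_and]; simp only [ind]
        intro hk
        rcases Decidable.em (k ∈ l) with hkl | hkl
        · exact absurd hk (not_lt.mpr (hlt k hkl).le)
        · simp [hkl]
      rw [coef, if_neg h1, h2, Finset.prod_empty]
    rw [hca, one_smul, ind_cons hal]

noncomputable def theta : Aq K n q →ₗ[K] VV K n where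
  toFun := fun a => rho K n q a (Finsupp.single 0 1)
  map_add' := by intro a b; simp [map_add]
  map_smul' := by intro c a; simp [map_smul]

lemma theta_eq' (g : Fin n → ZMod 2) :
    theta K n q (eq' K n q g) = Finsupp.single g 1 := by
  show rho K n q (eq' K n q g) (Finsupp.single 0 1) = _
  rw [eq'_eq_word, rho_word K n q _ (supp_sorted g), ind_supp]

lemma eq'_linearIndependent : LinearIndependent K (eq' K n q) := by
  apply LinearIndependent.of_comp (theta K n q)
  have hcomp : (⇑(theta K n q) ∘ eq' K n q) = fun g => Finsupp.single g (1 : K) := by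
    funext g
    exact theta_eq' K n q g
  rw [hcomp]
  have := Module.Basis.linearIndependent
    (Finsupp.basisSingleOne : Module.Basis (Fin n → ZMod 2) K (VV K n))
  simpa [Finsupp.coe_basisSingleOne] using this

end Rep

/- ### spanning, basis, and the main theorem -/

lemma zmod2_aux1 : ∀ a b : ZMod 2, a + 1 + b = 1 → b = a := by decide
lemma zmod2_aux2 : ∀ a : ZMod 2, a + 1 + a = 1 := by decide
lemma zmod2_aux3 : ∀ a b : ZMod 2, a + (b + 1) = 1 → a = -b := by decide

def tauF (n : ℕ) : Fin n → ZMod 2 := fun _ => 1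

@[simp] lemma tauF_apply (n : ℕ) (i : Fin n) : tauF n i = 1 := rfl

section Main
variable (K : Type) [Field K] (n : ℕ) (q : Fin n → Fin n → K)

lemma eq'_zero : eq' K n q 0 = 1 := by rw [eq'_eq_word, supp_zero, word_nil]

lemma eq'_dd (i : Fin n) : eq' K n q (dd i) = xq K n q i := by
  rw [eq'_eq_word, supp_dd, word_cons, word_nil, mul_one]

variable (hq : ∀ i j : Fin n, i < j → q i j ≠ 0)
include hq

lemma span_eq'_top : Submodule.span K (Set.range (eq' K n q)) = ⊤ := by
  set S : Submodule K (Aq K n q) := Submodule.span K (Set.range (eq' K n q)) with hS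
  have h1 : (1 : Aq K n q) ∈ S := Submodule.subset_span ⟨0, eq'_zero K n q⟩
  have hmulset : ∀ x y : Aq K n q, x ∈ S → y ∈ S → x * y ∈ S := by
    have hle : S * S ≤ S := by
      rw [hS, Submodule.span_mul_span]
      refine Submodule.span_le.mpr ?_
      rintro z ⟨u, ⟨g, rfl⟩, v, ⟨h, rfl⟩, rfl⟩
      obtain ⟨c, hc, _⟩ := eq'_mul_eq' K n q hq g h
      show eq' K n q g * eq' K n q h ∈ Submodule.span K (Set.range (eq' K n q))
      rw [hc]
      exact Submodule.smul_mem _ _ (Submodule.subset_span ⟨g + h, rfl⟩)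
    exact fun x y hx hy => hle (Submodule.mul_mem_mul hx hy)
  have htop : Algebra.adjoin K (Set.range (xq K n q)) = ⊤ := by
    have h2 := AlgHom.map_adjoin (RingQuot.mkAlgHom K (AqRel K n q))
      (Set.range (FreeAlgebra.ι K (X := Fin n)))
    rw [FreeAlgebra.adjoin_range_ι, Algebra.map_top] at h2
    have h3 : (RingQuot.mkAlgHom K (AqRel K n q)).range = ⊤ :=
      (AlgHom.range_eq_top _).mpr (RingQuot.mkAlgHom_surjective K _)
    rw [h3, ← Set.range_comp] at h2
    exact h2.symm
  refine Submodule.eq_top_iff'.mpr fun x => ?_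
  have hx : x ∈ Algebra.adjoin K (Set.range (xq K n q)) := by rw [htop]; trivial
  have hle2 : Algebra.adjoin K (Set.range (xq K n q)) ≤ S.toSubalgebra h1 hmulset := by
    apply Algebra.adjoin_le
    rintro z ⟨i, rfl⟩
    exact Submodule.mem_toSubalgebra.mpr
      (Submodule.subset_span ⟨dd i, eq'_dd K n q i⟩)
  exact Submodule.mem_toSubalgebra.mp (hle2 hx)

noncomputable def bAq : Module.Basis (Fin n → ZMod 2) K (Aq K n q) :=
  Module.Basis.mk (eq'_linearIndependent K n q) (le_of_eq (span_eq'_top K n q hq).symm)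

lemma bAq_apply (g : Fin n → ZMod 2) : bAq K n q hq g = eq' K n q g :=
  Module.Basis.mk_apply _ _ g

noncomputable def lamF : Aq K n q →ₗ[K] K := (bAq K n q hq).coord (tauF n)

noncomputable def psiF : Aq K n q →ₗ[K] Module.Dual K (Aq K n q) :=
  ((LinearMap.mul K (Aq K n q)).flip).compr₂ (lamF K n q hq)

lemma psiF_apply (x y : Aq K n q) :
    psiF K n q hq x y = lamF K n q hq (y * x) := by
  simp [psiF, LinearMap.compr₂_apply, LinearMap.flip_apply, LinearMap.mul_apply']

lemma lamF_eq' (k : Fin n → ZMod 2) :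
    lamF K n q hq (eq' K n q k) = if k = tauF n then 1 else 0 := by
  rw [lamF, ← bAq_apply K n q hq, Module.Basis.coord_apply, Module.Basis.repr_self,
    Finsupp.single_apply]

lemma psiF_injective : Function.Injective (psiF K n q hq) := by
  rw [← LinearMap.ker_eq_bot (M := Aq K n q)]
  rw [LinearMap.ker_eq_bot']
  intro x hx
  set b := bAq K n q hq with hb
  have hrep : ∀ g : Fin n → ZMod 2, b.repr x g = 0 := by
    intro g
    obtain ⟨c, hc, hcnz⟩ := eq'_mul_eq' K n q hq (g + tauF n) g
    have hdisj : ∀ i, (g + tauF n) i = 1 → g i = 0 := by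
      intro i hi
      rcases zmod2_em (g i) with h0 | h1
      · exact h0
      · exfalso
        rw [Pi.add_apply, h1, tauF_apply] at hi
        exact absurd hi (by decide)
    have hcne : c ≠ 0 := hcnz hdisj
    have hgg : g + tauF n + g = tauF n := by
      funext i
      rw [Pi.add_apply, Pi.add_apply, tauF_apply]
      exact zmod2_aux2 (g i)
    have hval : psiF K n q hq x (eq' K n q (g + tauF n)) = b.repr x g * c := by
      conv_lhs => rw [← b.sum_repr x]
      rw [map_sum, LinearMap.sum_apply]
      rw [Finset.sum_eq_single g]
      · rw [map_smul, LinearMap.smul_apply, psiF_apply, bAq_apply, hc, hgg,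
          map_smul, lamF_eq', if_pos rfl, smul_eq_mul, smul_eq_mul, mul_one]
      · intro h _ hne
        obtain ⟨c', hc', _⟩ := eq'_mul_eq' K n q hq (g + tauF n) h
        have hne' : g + tauF n + h ≠ tauF n := by
          intro hcon
          apply hne
          funext i
          have hi := congrFun hcon i
          rw [Pi.add_apply, Pi.add_apply, tauF_apply] at hi
          exact zmod2_aux1 _ _ hi
        rw [map_smul, LinearMap.smul_apply, psiF_apply, bAq_apply, hc',
          map_smul, lamF_eq', if_neg hne', smul_eq_mul, smul_eq_mul,
          mul_zero, mul_zero]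
      · intro hg
        exact absurd (Finset.mem_univ g) hg
    rw [hx, LinearMap.zero_apply] at hval
    exact (mul_eq_zero.mp hval.symm).resolve_right hcne
  have : b.repr x = 0 := Finsupp.ext hrep
  simpa using b.repr.map_eq_zero_iff.mp this

end Main

/-- **Proposition C (ii), positive part.**  `A(q)` with its `(ℤ/2)ⁿ`-grading is
`τ`-graded Frobenius for `τ = (1,…,1)`: there is a `K`-linear equivalence
`φ : A(q) ≃ A(q)*` which is left `A(q)`-linear (`φ(a·x)(y) = φ(x)(y·a)`) and maps the
component `A(q)(τ)_g = A(q)_{g+τ}` into `(A(q)*)_g = {f | f(A(q)_h) = 0 for h ≠ -g}`. -/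
theorem stmt8 (K : Type) [Field K] (n : ℕ) (hn : 2 ≤ n)
    (q : Fin n → Fin n → K) (hq : ∀ i j : Fin n, i < j → q i j ≠ 0) :
    ∃ φ : Aq K n q ≃ₗ[K] Module.Dual K (Aq K n q),
      (∀ a x y : Aq K n q, φ (a * x) y = φ x (y * a)) ∧
      (∀ g : Fin n → ZMod 2, ∀ x ∈ AqGrade K n q (g + fun _ => 1),
        ∀ h : Fin n → ZMod 2, h ≠ -g → ∀ y ∈ AqGrade K n q h, φ x y = 0) := by
  haveI : Module.Finite K (Aq K n q) := Module.Finite.of_basis (bAq K n q hq)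
  refine ⟨(psiF K n q hq).linearEquivOfInjective (psiF_injective K n q hq)
    Subspace.dual_finrank_eq.symm, ?_, ?_⟩
  · intro a x y
    rw [LinearMap.linearEquivOfInjective_apply, LinearMap.linearEquivOfInjective_apply,
      psiF_apply, psiF_apply, mul_assoc]
  · intro g x hx h hne y hy
    rw [LinearMap.linearEquivOfInjective_apply, psiF_apply]
    have hx' : x ∈ Submodule.span K {eq' K n q (g + tauF n)} := hx
    have hy' : y ∈ Submodule.span K {eq' K n q h} := hy
    obtain ⟨a, rfl⟩ := Submodule.mem_span_singleton.mp hx'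
    obtain ⟨b', rfl⟩ := Submodule.mem_span_singleton.mp hy'
    obtain ⟨c, hc, _⟩ := eq'_mul_eq' K n q hq h (g + tauF n)
    have hne' : h + (g + tauF n) ≠ tauF n := by
      intro hcon
      apply hne
      funext i
      have hi := congrFun hcon i
      rw [Pi.add_apply, Pi.add_apply, tauF_apply] at hi
      have := zmod2_aux3 _ _ hi
      rw [this, Pi.neg_apply]
    rw [smul_mul_assoc, mul_smul_comm, hc, map_smul, map_smul, map_smul,
      lamF_eq', if_neg hne', smul_eq_mul, smul_eq_mul, smul_eq_mul,
      mul_zero, mul_zero, mul_zero]
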